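/- arXiv:1801.03216 — 4 statements merged into one kernel-verified Lean document; each statement's English description precedes it below -/
import Mathlib

section
/- For the sets C₁ = co{(−2,2,1), (−2,2,−1)}, C₂ = co{(2,2,1), (2,2,−1)} and the solid cylinder D = {(x,y,z) ∈ ℝ³ : x² + y² ≤ 1, |z| ≤ 1}, the set of least-squares solutions argmin_{u∈ℝ³} (d(u,C₁)² + d(u,C₂)² + d(u,D)²) equals the vertical segment {(0, 5/3, z) : |z| ≤ 1}. -/
noncomputable section
open Real Filter

/-- ℝ³ with the Euclidean structure. -/
abbrev E3 : Type := EuclideanSpace ℝ (Fin 3)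
/-- ℝ² with the Euclidean structure. -/
abbrev E2 : Type := EuclideanSpace ℝ (Fin 2)

/-- The real inner product. -/
def ip {E : Type} [NormedAddCommGroup E] [InnerProductSpace ℝ E] (x y : E) : ℝ :=
  inner ℝ x y

/-- `w` is the metric projection of `u` onto `C`, characterised by membership
together with the variational inequality `⟪v - w, u - w⟫ ≤ 0` for all `v ∈ C`. -/
def IsProj {E : Type} [NormedAddCommGroup E] [InnerProductSpace ℝ E]
    (C : Set E) (u w : E) : Prop :=
  w ∈ C ∧ ∀ v ∈ C, inner ℝ (v - w) (u - w) ≤ (0 : ℝ)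

/-- `(u₁,u₂,u₃)` is an ε-cycle for `(C₁,C₂,C₃)` with support `(w₁,w₂,w₃)`. -/
def IsCycleWithSupport {E : Type} [NormedAddCommGroup E] [InnerProductSpace ℝ E]
    (C₁ C₂ C₃ : Set E) (ε : ℝ) (u₁ u₂ u₃ w₁ w₂ w₃ : E) : Prop :=
  IsProj C₁ u₃ w₁ ∧ IsProj C₂ u₁ w₂ ∧ IsProj C₃ u₂ w₃ ∧
    u₁ = u₃ + ε • (w₁ - u₃) ∧ u₂ = u₁ + ε • (w₂ - u₁) ∧ u₃ = u₂ + ε • (w₃ - u₂)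

/-- `(u₁,u₂,u₃)` is an ε-cycle for `(C₁,C₂,C₃)`. -/
def IsCycle {E : Type} [NormedAddCommGroup E] [InnerProductSpace ℝ E]
    (C₁ C₂ C₃ : Set E) (ε : ℝ) (u₁ u₂ u₃ : E) : Prop :=
  ∃ w₁ w₂ w₃ : E, IsCycleWithSupport C₁ C₂ C₃ ε u₁ u₂ u₃ w₁ w₂ w₃

/-- An admissible sequence: strictly increasing (on indices `k ≥ 1`), starting
at `t₁ = π/4` and converging to `π/2`. -/
def Admissible (t : ℕ → ℝ) : Prop :=
  StrictMonoOn t (Set.Ici 1) ∧ t 1 = π / 4 ∧ Tendsto t atTop (nhds (π / 2))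

/-- The segment C₁ = co{(−2,2,1), (−2,2,−1)}. -/
def C1 : Set E3 := convexHull ℝ {WithLp.toLp 2 ![(-2 : ℝ), 2, 1], WithLp.toLp 2 ![(-2 : ℝ), 2, -1]}

/-- The segment C₂ = co{(2,2,1), (2,2,−1)}. -/
def C2 : Set E3 := convexHull ℝ {WithLp.toLp 2 ![(2 : ℝ), 2, 1], WithLp.toLp 2 ![(2 : ℝ), 2, -1]}

/-- The points pₖ = (cos tₖ, sin tₖ, (−1)ᵏ). -/
def pSeq (t : ℕ → ℝ) (k : ℕ) : E3 := WithLp.toLp 2 ![Real.cos (t k), Real.sin (t k), (-1 : ℝ) ^ k]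

/-- C₃ = closed convex hull of {pₖ : k ≥ 1}. -/
def C3 (t : ℕ → ℝ) : Set E3 := closure (convexHull ℝ (pSeq t '' {k | 1 ≤ k}))

/-- a = (−2,2). -/
def aPt : E2 := WithLp.toLp 2 ![(-2 : ℝ), 2]
/-- b = (2,2). -/
def bPt : E2 := WithLp.toLp 2 ![(2 : ℝ), 2]
/-- vₖ = (cos tₖ, sin tₖ). -/
def vSeq (t : ℕ → ℝ) (k : ℕ) : E2 := WithLp.toLp 2 ![Real.cos (t k), Real.sin (t k)]
/-- C₁' = {a}. -/
def C1' : Set E2 := {aPt}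
/-- C₂' = {b}. -/
def C2' : Set E2 := {bPt}
/-- C₃' = closed convex hull of {vₖ : k ≥ 1}. -/
def C3' (t : ℕ → ℝ) : Set E2 := closure (convexHull ℝ (vSeq t '' {k | 1 ≤ k}))

/-- Projection of ℝ³ onto the xy-plane. -/
def projXY (x : E3) : E2 := WithLp.toLp 2 ![x 0, x 1]

/-- Lifting a point of the xy-plane to height `z`. -/
def liftZ (p : E2) (z : ℝ) : E3 := WithLp.toLp 2 ![p 0, p 1, z]

/-- The solid cylinder D. -/
def Dcyl : Set E3 := {x | x 0 ^ 2 + x 1 ^ 2 ≤ 1 ∧ |x 2| ≤ 1}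

lemma lsq_dist_sq (u v : E3) :
    dist u v ^ 2 = (u 0 - v 0)^2 + (u 1 - v 1)^2 + (u 2 - v 2)^2 := by
  rw [EuclideanSpace.dist_eq, Real.sq_sqrt (by positivity)]
  simp [Fin.sum_univ_three, Real.dist_eq, sq_abs]

lemma lsq_mem_C1 {v : E3} (hv : v ∈ C1) : v 0 = -2 ∧ v 1 = 2 ∧ |v 2| ≤ 1 := by
  rw [C1, convexHull_pair] at hv
  obtain ⟨a, b, ha, hb, hab, hv⟩ := hv
  subst hv
  have h0 : ∀ i : Fin 3, (a • (WithLp.toLp 2 ![(-2 : ℝ), 2, 1] : E3) + b • (WithLp.toLp 2 ![(-2 : ℝ), 2, -1] : E3)) i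
      = a * (![(-2 : ℝ), 2, 1] i) + b * (![(-2 : ℝ), 2, -1] i) := fun i => rfl
  rw [h0, h0, h0]
  simp only [Matrix.cons_val_zero, Matrix.cons_val_one, Matrix.head_cons,
    Matrix.cons_val_two, Matrix.tail_cons]
  refine ⟨by linarith, by linarith, ?_⟩
  rw [abs_le]; constructor <;> nlinarith

lemma lsq_mem_C2 {v : E3} (hv : v ∈ C2) : v 0 = 2 ∧ v 1 = 2 ∧ |v 2| ≤ 1 := by
  rw [C2, convexHull_pair] at hv
  obtain ⟨a, b, ha, hb, hab, hv⟩ := hv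
  subst hv
  have h0 : ∀ i : Fin 3, (a • (WithLp.toLp 2 ![(2 : ℝ), 2, 1] : E3) + b • (WithLp.toLp 2 ![(2 : ℝ), 2, -1] : E3)) i
      = a * (![(2 : ℝ), 2, 1] i) + b * (![(2 : ℝ), 2, -1] i) := fun i => rfl
  rw [h0, h0, h0]
  simp only [Matrix.cons_val_zero, Matrix.cons_val_one, Matrix.head_cons,
    Matrix.cons_val_two, Matrix.tail_cons]
  refine ⟨by linarith, by linarith, ?_⟩
  rw [abs_le]; constructor <;> nlinarith

lemma lsq_C1_mem {z : ℝ} (hz : |z| ≤ 1) : (WithLp.toLp 2 ![(-2:ℝ),2,z] : E3) ∈ C1 := by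
  rw [C1, convexHull_pair]
  rw [abs_le] at hz
  refine ⟨(1+z)/2, (1-z)/2, by linarith, by linarith, by ring, ?_⟩
  ext i
  fin_cases i <;>
    simp [PiLp.add_apply, PiLp.smul_apply, smul_eq_mul] <;> ring

lemma lsq_C2_mem {z : ℝ} (hz : |z| ≤ 1) : (WithLp.toLp 2 ![(2:ℝ),2,z] : E3) ∈ C2 := by
  rw [C2, convexHull_pair]
  rw [abs_le] at hz
  refine ⟨(1+z)/2, (1-z)/2, by linarith, by linarith, by ring, ?_⟩
  ext i
  fin_cases i <;>
    simp [PiLp.add_apply, PiLp.smul_apply, smul_eq_mul] <;> ring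

lemma lsq_sq_infDist_ge {S : Set E3} (hS : S.Nonempty) (u : E3)
    {L : ℝ} (hL : 0 ≤ L) (h : ∀ v ∈ S, L ≤ dist u v ^ 2) : L ≤ Metric.infDist u S ^ 2 := by
  have h1 : Real.sqrt L ≤ Metric.infDist u S := by
    rw [Metric.infDist_eq_iInf]
    haveI : Nonempty S := hS.to_subtype
    refine le_ciInf fun v => ?_
    have := h v v.2
    nlinarith [Real.sq_sqrt hL, Real.sqrt_nonneg L, dist_nonneg (x := u) (y := (v:E3))]
  nlinarith [Real.sq_sqrt hL, Real.sqrt_nonneg L]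

lemma lsq_sq_infDist_le {S : Set E3} (u w : E3) (hw : w ∈ S) :
    Metric.infDist u S ^ 2 ≤ dist u w ^ 2 := by
  have h1 := Metric.infDist_le_dist_of_mem (x := u) hw
  nlinarith [Metric.infDist_nonneg (x := u) (s := S)]

lemma lsq_clamp_abs (z : ℝ) : |max (-1) (min 1 z)| ≤ 1 := by
  rw [abs_le]
  exact ⟨le_max_left _ _, max_le (by norm_num) (min_le_left _ _)⟩

lemma lsq_clamp_best {z t : ℝ} (ht : |t| ≤ 1) : (z - max (-1) (min 1 z))^2 ≤ (z - t)^2 := by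
  rw [abs_le] at ht
  rcases le_total z (-1) with h | h
  · rw [min_eq_right (by linarith), max_eq_left (by linarith)]
    nlinarith
  · rcases le_total 1 z with h' | h'
    · rw [min_eq_left h', max_eq_right (by norm_num)]
      nlinarith
    · rw [min_eq_right h', max_eq_right h]
      nlinarith

lemma lsq_clamp_self {z : ℝ} (hz : |z| ≤ 1) : max (-1) (min 1 z) = z := by
  rw [abs_le] at hz
  rw [min_eq_right hz.2, max_eq_right hz.1]

lemma lsq_max_best {b t : ℝ} (ht : t ≤ 1) : (max 0 (b-1))^2 ≤ (b - t)^2 := by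
  rcases le_total b 1 with h | h
  · rw [max_eq_left (by linarith)]
    nlinarith [sq_nonneg (b - t)]
  · rw [max_eq_right (by linarith)]
    nlinarith

lemma lsq_base0 (b : ℝ) : 26/3 ≤ 8 + 2*(b-2)^2 + (max 0 (b-1))^2 := by
  rcases le_total b 1 with h | h
  · rw [max_eq_left (by linarith)]; nlinarith
  · rw [max_eq_right (by linarith)]; nlinarith [sq_nonneg (b - 5/3)]

lemma lsq_strict0 {b : ℝ} (hb : b ≠ 5/3) : 26/3 < 8 + 2*(b-2)^2 + (max 0 (b-1))^2 := by
  rcases le_total b 1 with h | h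
  · rw [max_eq_left (by linarith)]; nlinarith
  · rw [max_eq_right (by linarith)]
    have hne : b - 5/3 ≠ 0 := sub_ne_zero.mpr hb
    have : (b - 5/3)^2 > 0 := by positivity
    nlinarith

lemma lsq_lower (u : E3) :
    2*(u 0)^2 + 8 + 2*(u 1 - 2)^2 + (max 0 (u 1 - 1))^2
      + 3*(u 2 - max (-1) (min 1 (u 2)))^2 ≤
    Metric.infDist u C1 ^ 2 + Metric.infDist u C2 ^ 2 + Metric.infDist u Dcyl ^ 2 := by
  set h := (u 2 - max (-1) (min 1 (u 2)))^2 with hh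
  have hhn : 0 ≤ h := sq_nonneg _
  have h1 : (u 0 + 2)^2 + (u 1 - 2)^2 + h ≤ Metric.infDist u C1 ^ 2 := by
    refine lsq_sq_infDist_ge (L := (u 0 + 2)^2 + (u 1 - 2)^2 + h) ⟨_, lsq_C1_mem (z := 0) (by norm_num)⟩ u (by positivity) ?_
    intro v hv
    obtain ⟨e0, e1, e2⟩ := lsq_mem_C1 hv
    rw [lsq_dist_sq, e0, e1]
    have := lsq_clamp_best (z := u 2) e2
    nlinarith
  have h2 : (u 0 - 2)^2 + (u 1 - 2)^2 + h ≤ Metric.infDist u C2 ^ 2 := by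
    refine lsq_sq_infDist_ge (L := (u 0 - 2)^2 + (u 1 - 2)^2 + h) ⟨_, lsq_C2_mem (z := 0) (by norm_num)⟩ u (by positivity) ?_
    intro v hv
    obtain ⟨e0, e1, e2⟩ := lsq_mem_C2 hv
    rw [lsq_dist_sq, e0, e1]
    have := lsq_clamp_best (z := u 2) e2
    nlinarith
  have h3 : (max 0 (u 1 - 1))^2 + h ≤ Metric.infDist u Dcyl ^ 2 := by
    refine lsq_sq_infDist_ge (L := (max 0 (u 1 - 1))^2 + h) ⟨(0 : E3), by constructor <;> norm_num⟩ u (by positivity) ?_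
    intro v hv
    obtain ⟨e1, e2⟩ := hv
    rw [lsq_dist_sq]
    have hv1 : v 1 ≤ 1 := by nlinarith [sq_nonneg (v 0), sq_nonneg (v 1 - 1)]
    have hb := lsq_max_best (b := u 1) hv1
    have hc := lsq_clamp_best (z := u 2) e2
    nlinarith [sq_nonneg (u 0 - v 0)]
  nlinarith

lemma lsq_upper (u : E3) (h0 : u 0 = 0) (h1 : u 1 = 5/3) (h2 : |u 2| ≤ 1) :
    Metric.infDist u C1 ^ 2 + Metric.infDist u C2 ^ 2 + Metric.infDist u Dcyl ^ 2 ≤ 26/3 := by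
  have e1 : Metric.infDist u C1 ^ 2 ≤ 37/9 := by
    have := lsq_sq_infDist_le u _ (lsq_C1_mem h2)
    rw [lsq_dist_sq] at this
    simp only [PiLp.toLp_apply, Matrix.cons_val_zero, Matrix.cons_val_one, Matrix.head_cons,
      Matrix.cons_val_two, Matrix.tail_cons] at this
    rw [h0, h1] at this
    norm_num at this
    linarith
  have e2 : Metric.infDist u C2 ^ 2 ≤ 37/9 := by
    have := lsq_sq_infDist_le u _ (lsq_C2_mem h2)
    rw [lsq_dist_sq] at this
    simp only [PiLp.toLp_apply, Matrix.cons_val_zero, Matrix.cons_val_one, Matrix.head_cons,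
      Matrix.cons_val_two, Matrix.tail_cons] at this
    rw [h0, h1] at this
    norm_num at this
    linarith
  have e3 : Metric.infDist u Dcyl ^ 2 ≤ 4/9 := by
    have hw : (WithLp.toLp 2 ![(0:ℝ), 1, u 2] : E3) ∈ Dcyl := by
      constructor <;> simp [h2]
    have := lsq_sq_infDist_le u _ hw
    rw [lsq_dist_sq] at this
    simp only [PiLp.toLp_apply, Matrix.cons_val_zero, Matrix.cons_val_one, Matrix.head_cons,
      Matrix.cons_val_two, Matrix.tail_cons] at this
    rw [h0, h1] at this
    norm_num at this
    linarith
  linarith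

theorem stmt15 :
    {u : E3 | ∀ x : E3,
        Metric.infDist u C1 ^ 2 + Metric.infDist u C2 ^ 2 + Metric.infDist u Dcyl ^ 2 ≤
        Metric.infDist x C1 ^ 2 + Metric.infDist x C2 ^ 2 + Metric.infDist x Dcyl ^ 2} =
      {u : E3 | u 0 = 0 ∧ u 1 = 5 / 3 ∧ |u 2| ≤ 1} := by
  ext u
  simp only [Set.mem_setOf_eq]
  constructor
  · intro hu
    have hle := le_trans (hu (WithLp.toLp 2 ![0, 5/3, 0] : E3))
      (lsq_upper (WithLp.toLp 2 ![0, 5/3, 0] : E3) (by simp) (by simp) (by simp))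
    have hlow := lsq_lower u
    have hb := lsq_base0 (u 1)
    have hcn : (0:ℝ) ≤ (u 2 - max (-1) (min 1 (u 2)))^2 := sq_nonneg _
    have hu0 : u 0 = 0 := by
      have : (u 0)^2 ≤ 0 := by nlinarith
      nlinarith [sq_nonneg (u 0)]
    have hu2 : |u 2| ≤ 1 := by
      have hz : (u 2 - max (-1) (min 1 (u 2)))^2 ≤ 0 := by nlinarith [sq_nonneg (u 0)]
      have : u 2 = max (-1) (min 1 (u 2)) := by nlinarith
      rw [this]
      exact lsq_clamp_abs _
    have hu1 : u 1 = 5/3 := by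
      by_contra hne
      have := lsq_strict0 hne
      nlinarith [sq_nonneg (u 0)]
    exact ⟨hu0, hu1, hu2⟩
  · rintro ⟨h0, h1, h2⟩ x
    have hup := lsq_upper u h0 h1 h2
    have hlow := lsq_lower x
    have hb := lsq_base0 (x 1)
    nlinarith [sq_nonneg (x 0), sq_nonneg (x 2 - max (-1) (min 1 (x 2)))]
end
end

section
/- For every k ≥ 1, the point p_k = (cos t_k, sin t_k, (−1)^k) is an extreme point of C₃, the closed convex hull of {p_j : j ≥ 1}. -/
noncomputable section
open Real Filter

set_option maxHeartbeats 1000000 in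
theorem stmt16 (t : ℕ → ℝ) (ht : Admissible t) (k : ℕ) (hk : 1 ≤ k) :
    pSeq t k ∈ Set.extremePoints ℝ (C3 t) := by
  obtain ⟨hmono, ht1, hlim⟩ := ht
  have hpi : (0:ℝ) < π := Real.pi_pos
  -- every t j with j ≥ 1 lies in [π/4, π/2)
  have hlb : ∀ j, 1 ≤ j → π/4 ≤ t j := by
    intro j hj
    have := hmono.monotoneOn (Set.mem_Ici.2 le_rfl) (Set.mem_Ici.2 hj) hj
    linarith [this, ht1.symm ▸ this]
  have hub : ∀ j, 1 ≤ j → t j < π/2 := by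
    intro j hj
    have h1 : t j < t (j+1) := hmono (Set.mem_Ici.2 hj) (Set.mem_Ici.2 (by omega)) (by omega)
    have h2 : t (j+1) ≤ π/2 := by
      apply ge_of_tendsto hlim
      filter_upwards [eventually_ge_atTop (j+1)] with n hn
      rcases eq_or_lt_of_le hn with h | h
      · rw [h]
      · exact (hmono (Set.mem_Ici.2 (by omega)) (Set.mem_Ici.2 (by omega)) h).le
    linarith
  -- the gap d
  set d : ℝ := if k = 1 then t (k+1) - t k else min (t (k+1) - t k) (t k - t (k-1)) with hd
  have hd1 : d ≤ t (k+1) - t k := by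
    rw [hd]; split
    · exact le_rfl
    · exact min_le_left _ _
  have hd2 : 2 ≤ k → d ≤ t k - t (k-1) := by
    intro h2k
    rw [hd]; rw [if_neg (by omega)]
    exact min_le_right _ _
  have hdpos : 0 < d := by
    have h1 : t k < t (k+1) := hmono (Set.mem_Ici.2 hk) (Set.mem_Ici.2 (by omega)) (by omega)
    have h2 : k ≠ 1 → t (k-1) < t k := by
      intro h
      exact hmono (Set.mem_Ici.2 (by omega)) (Set.mem_Ici.2 hk) (by omega)
    rw [hd]; split
    · linarith
    · rename_i h; exact lt_min (by linarith) (by linarith [h2 h])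
  have hdle : d ≤ π := by
    have := hub (k+1) (by omega)
    have := hlb k hk
    linarith
  have hm1 : Real.cos d < 1 := by
    have := Real.cos_lt_cos_of_nonneg_of_le_pi le_rfl hdle hdpos
    simpa using this
  set m : ℝ := Real.cos d with hm
  -- key angle estimate
  have hcos : ∀ j, 1 ≤ j → j ≠ k → Real.cos (t k - t j) ≤ m := by
    intro j hj hjk
    rcases lt_or_gt_of_ne hjk with hlt | hgt
    · -- j < k, so k ≥ 2
      have h2k : 2 ≤ k := by omega
      have hmem : t j ≤ t (k-1) := by
        rcases eq_or_lt_of_le (show j ≤ k-1 by omega) with h | h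
        · rw [h]
        · exact (hmono (Set.mem_Ici.2 hj) (Set.mem_Ici.2 (by omega)) h).le
      have h1 : d ≤ t k - t j := le_trans (hd2 h2k) (by linarith)
      have h2 : t k - t j ≤ π := by
        have := hub k hk; have := hlb j hj; linarith
      exact Real.cos_le_cos_of_nonneg_of_le_pi hdpos.le h2 h1
    · -- j > k
      have hmem : t (k+1) ≤ t j := by
        rcases eq_or_lt_of_le (show k+1 ≤ j by omega) with h | h
        · rw [← h]
        · exact (hmono (Set.mem_Ici.2 (by omega)) (Set.mem_Ici.2 hj) h).le
      have h1 : d ≤ t j - t k := le_trans hd1 (by linarith)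
      have h2 : t j - t k ≤ π := by
        have := hub j hj; have := hlb k hk; linarith
      have : Real.cos (t j - t k) ≤ m :=
        Real.cos_le_cos_of_nonneg_of_le_pi hdpos.le h2 h1
      rwa [show t k - t j = -(t j - t k) by ring, Real.cos_neg]
  -- the linear functional
  set pk : E3 := pSeq t k with hpk
  set f : E3 → ℝ := fun x => Real.cos (t k) * x 0 + Real.sin (t k) * x 1 + (-1)^k * x 2
    with hf
  have hfcont : Continuous f := by
    apply Continuous.add
    apply Continuous.add
    · exact continuous_const.mul (EuclideanSpace.proj (0 : Fin 3)).continuous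
    · exact continuous_const.mul (EuclideanSpace.proj (1 : Fin 3)).continuous
    · exact continuous_const.mul (EuclideanSpace.proj (2 : Fin 3)).continuous
  have hflin : ∀ (a b : ℝ) (x y : E3), f (a • x + b • y) = a * f x + b * f y := by
    intro a b x y
    simp only [hf, PiLp.add_apply, PiLp.smul_apply, smul_eq_mul]
    ring
  -- values of f on the points
  have hpcoord : ∀ j, pSeq t j 0 = Real.cos (t j) ∧ pSeq t j 1 = Real.sin (t j)
      ∧ pSeq t j 2 = (-1:ℝ)^j := by
    intro j; refine ⟨rfl, rfl, rfl⟩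
  have hfk : f pk = 2 := by
    have hsq : ((-1:ℝ)^k) * ((-1:ℝ)^k) = 1 := by
      rw [← pow_add]
      exact Even.neg_one_pow ⟨k, by ring⟩
    simp only [hf, hpk, pSeq]
    show Real.cos (t k) * Real.cos (t k) + Real.sin (t k) * Real.sin (t k)
        + (-1:ℝ)^k * (-1:ℝ)^k = 2
    nlinarith [Real.sin_sq_add_cos_sq (t k)]
  have hfj : ∀ j, 1 ≤ j → j ≠ k → f (pSeq t j) ≤ 1 + m := by
    intro j hj hjk
    have h1 : ((-1:ℝ)^k) * ((-1:ℝ)^j) ≤ 1 := by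
      rcases Nat.even_or_odd (k+j) with h | h
      · rw [← pow_add, h.neg_one_pow]
      · rw [← pow_add, h.neg_one_pow]; norm_num
    have h2 : Real.cos (t k) * Real.cos (t j) + Real.sin (t k) * Real.sin (t j)
        = Real.cos (t k - t j) := (Real.cos_sub _ _).symm
    have h3 := hcos j hj hjk
    simp only [hf, pSeq]
    show Real.cos (t k) * Real.cos (t j) + Real.sin (t k) * Real.sin (t j)
        + (-1:ℝ)^k * (-1:ℝ)^j ≤ 1 + m
    linarith [h2 ▸ h3]
  -- norm bound
  have hnbd : ∀ j, 1 ≤ j → ‖pSeq t j - pk‖ ≤ 4 := by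
    intro j hj
    have hsqj : ((-1:ℝ)^j)^2 = 1 := by
      rw [← pow_mul, mul_comm, pow_mul]; norm_num
    have hsqk : ((-1:ℝ)^k)^2 = 1 := by
      rw [← pow_mul, mul_comm, pow_mul]; norm_num
    have key : ‖pSeq t j - pk‖ ≤ Real.sqrt 16 := by
      rw [EuclideanSpace.norm_eq]
      apply Real.sqrt_le_sqrt
      rw [Fin.sum_univ_three]
      simp only [hpk, PiLp.sub_apply, pSeq]
      show ‖Real.cos (t j) - Real.cos (t k)‖^2 + ‖Real.sin (t j) - Real.sin (t k)‖^2
          + ‖(-1:ℝ)^j - (-1:ℝ)^k‖^2 ≤ 16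
      rw [Real.norm_eq_abs, Real.norm_eq_abs, Real.norm_eq_abs, sq_abs, sq_abs, sq_abs]
      nlinarith [Real.neg_one_le_cos (t j), Real.cos_le_one (t j),
        Real.neg_one_le_cos (t k), Real.cos_le_one (t k),
        Real.neg_one_le_sin (t j), Real.sin_le_one (t j),
        Real.neg_one_le_sin (t k), Real.sin_le_one (t k),
        sq_nonneg ((-1:ℝ)^j + (-1:ℝ)^k)]
    rwa [show (16:ℝ) = 4^2 by norm_num, Real.sqrt_sq (by norm_num : (0:ℝ) ≤ 4)] at key
  -- the trap set T
  set K : ℝ := 4 / (1 - m) with hK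
  have hKpos : 0 < K := div_pos (by norm_num) (by linarith)
  have hKm : K * (1 - m) = 4 := div_mul_cancel₀ 4 (by linarith)
  set T : Set E3 := {x | f x ≤ 2 ∧ ‖x - pk‖ ≤ K * (2 - f x)} with hT
  have hTclosed : IsClosed T := by
    have h1 : IsClosed {x : E3 | f x ≤ 2} := isClosed_le hfcont continuous_const
    have h2 : IsClosed {x : E3 | ‖x - pk‖ ≤ K * (2 - f x)} :=
      isClosed_le (continuous_norm.comp (continuous_id.sub continuous_const))
        (continuous_const.mul (continuous_const.sub hfcont))
    exact h1.inter h2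
  have hTconv : Convex ℝ T := by
    intro x hx y hy a b ha hb hab
    obtain ⟨hx1, hx2⟩ := hx
    obtain ⟨hy1, hy2⟩ := hy
    have hfl := hflin a b x y
    constructor
    · show f (a • x + b • y) ≤ 2
      rw [hfl]; nlinarith
    · show ‖a • x + b • y - pk‖ ≤ K * (2 - f (a • x + b • y))
      have h1 : a • x + b • y - pk = a • (x - pk) + b • (y - pk) := by
        have hp : a • pk + b • pk = pk := by rw [← add_smul, hab, one_smul]
        calc a • x + b • y - pk = a • x + b • y - (a • pk + b • pk) := by rw [hp]
          _ = a • (x - pk) + b • (y - pk) := by rw [smul_sub, smul_sub]; abel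
      rw [h1, hfl]
      calc ‖a • (x - pk) + b • (y - pk)‖ ≤ ‖a • (x - pk)‖ + ‖b • (y - pk)‖ :=
            norm_add_le _ _
        _ = a * ‖x - pk‖ + b * ‖y - pk‖ := by
            rw [norm_smul, norm_smul, Real.norm_eq_abs, Real.norm_eq_abs,
              abs_of_nonneg ha, abs_of_nonneg hb]
        _ ≤ a * (K * (2 - f x)) + b * (K * (2 - f y)) := by
            apply add_le_add
            · exact mul_le_mul_of_nonneg_left hx2 ha
            · exact mul_le_mul_of_nonneg_left hy2 hb
        _ = K * (2 - (a * f x + b * f y)) := by linear_combination 2*K*hab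
  have hST : pSeq t '' {j | 1 ≤ j} ⊆ T := by
    rintro _ ⟨j, hj, rfl⟩
    by_cases hjk : j = k
    · subst hjk
      refine ⟨le_of_eq (hpk ▸ hfk), ?_⟩
      rw [hpk, sub_self, norm_zero, hfk]
      simp
    · have h1 := hfj j hj hjk
      refine ⟨by linarith, ?_⟩
      have h2 : K * (1 - m) ≤ K * (2 - f (pSeq t j)) := by
        apply mul_le_mul_of_nonneg_left _ hKpos.le
        linarith
      rw [hKm] at h2
      exact le_trans (hnbd j hj) h2
  have hC3T : C3 t ⊆ T :=
    closure_minimal (convexHull_min hST hTconv) hTclosed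
  -- conclude
  have hpkC3 : pk ∈ C3 t :=
    subset_closure (subset_convexHull ℝ _ ⟨k, hk, rfl⟩)
  rw [mem_extremePoints]
  refine ⟨hpkC3, ?_⟩
  intro x₁ hx₁ x₂ hx₂ hseg
  obtain ⟨a, b, ha, hb, hab, hxy⟩ := hseg
  obtain ⟨h11, h12⟩ := hC3T hx₁
  obtain ⟨h21, h22⟩ := hC3T hx₂
  have heq : a * f x₁ + b * f x₂ = 2 := by
    rw [← hflin, hxy, hfk]
  have hf1 : f x₁ = 2 := by nlinarith
  have hf2 : f x₂ = 2 := by nlinarith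
  rw [hf1] at h12
  rw [hf2] at h22
  simp only [sub_self, mul_zero] at h12 h22
  constructor
  · have := norm_le_zero_iff.mp h12
    exact sub_eq_zero.mp this
  · have := norm_le_zero_iff.mp h22
    exact sub_eq_zero.mp this
end
end

section
/- Consider the sets C₁ = co{(−2,2,1), (−2,2,−1)}, C₂ = co{(2,2,1), (2,2,−1)} and the solid cylinder D = {(x,y,z) ∈ ℝ³ : x² + y² ≤ 1, |z| ≤ 1}, fix ε ∈ (0,1], and let (u_n)_{n≥0} be the ε-under-relaxed cyclic projection sequence starting from u₀ = (x₀, y₀, z₀) with |z₀| ≤ 1: u_{3k+1} = u_{3k} + ε(Π_{C₁}(u_{3k}) − u_{3k}), u_{3k+2} = u_{3k+1} + ε(Π_{C₂}(u_{3k+1}) − u_{3k+1}), u_{3k+3} = u_{3k+2} + ε(Π_D(u_{3k+2}) − u_{3k+2}). Then every iterate u_n has third coordinate equal to z₀. -/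
noncomputable section
open Real Filter

lemma seg_proj_z (c : ℝ) (u w : E3) (hu : |u 2| ≤ 1)
    (h : IsProj (convexHull ℝ ({WithLp.toLp 2 ![c, 2, 1], WithLp.toLp 2 ![c, 2, (-1:ℝ)]} : Set E3)) u w) : w 2 = u 2 := by
  obtain ⟨hw, hvi⟩ := h
  -- v = (c, 2, u 2) belongs to the segment
  have hv : (WithLp.toLp 2 ![c, 2, u 2] : E3) ∈ convexHull ℝ ({WithLp.toLp 2 ![c, 2, 1], WithLp.toLp 2 ![c, 2, (-1:ℝ)]} : Set E3) := by
    rw [convexHull_pair]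
    refine ⟨(u 2 + 1) / 2, (1 - u 2) / 2, by cases' abs_le.1 hu with h1 h2; linarith,
      by cases' abs_le.1 hu with h1 h2; linarith, by ring, ?_⟩
    ext i
    fin_cases i <;>
      simp [PiLp.add_apply, PiLp.smul_apply, smul_eq_mul] <;> ring
  -- w has the form (c, 2, s)
  rw [convexHull_pair] at hw
  obtain ⟨a, b, ha, hb, hab, hwe⟩ := hw
  have hac : a * c + b * c = c := by rw [← add_mul, hab, one_mul]
  have hw0 : w 0 = c := by
    rw [← hwe]; simp [PiLp.add_apply, PiLp.smul_apply, smul_eq_mul]; linarith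
  have hw1 : w 1 = 2 := by
    rw [← hwe]; simp [PiLp.add_apply, PiLp.smul_apply, smul_eq_mul]; linarith
  have h' := hvi _ hv
  simp [PiLp.inner_apply, Fin.sum_univ_three, PiLp.sub_apply, RCLike.inner_apply,
    conj_trivial, hw0, hw1] at h'
  nlinarith [h', sq_nonneg (u 2 - w 2)]

lemma cyl_proj_z (u w : E3) (hu : |u 2| ≤ 1) (h : IsProj Dcyl u w) : w 2 = u 2 := by
  obtain ⟨⟨hw1, _⟩, hvi⟩ := h
  have hv : (WithLp.toLp 2 ![w 0, w 1, u 2] : E3) ∈ Dcyl := by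
    constructor
    · simpa using hw1
    · simpa using hu
  have h' := hvi _ hv
  simp [PiLp.inner_apply, Fin.sum_univ_three, PiLp.sub_apply, RCLike.inner_apply,
    conj_trivial] at h'
  nlinarith [h', sq_nonneg (u 2 - w 2)]

lemma step_z (ε : ℝ) (x y w : E3) (hw : w 2 = x 2) (h : y = x + ε • (w - x)) :
    y 2 = x 2 := by
  rw [h]
  simp [PiLp.add_apply, PiLp.smul_apply, PiLp.sub_apply, smul_eq_mul, hw]

theorem stmt17 (ε : ℝ) (hε : ε ∈ Set.Ioc (0 : ℝ) 1) (u : ℕ → E3) (hz : |u 0 2| ≤ 1)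
    (h1 : ∀ k : ℕ, ∃ w, IsProj C1 (u (3 * k)) w ∧
        u (3 * k + 1) = u (3 * k) + ε • (w - u (3 * k)))
    (h2 : ∀ k : ℕ, ∃ w, IsProj C2 (u (3 * k + 1)) w ∧
        u (3 * k + 2) = u (3 * k + 1) + ε • (w - u (3 * k + 1)))
    (h3 : ∀ k : ℕ, ∃ w, IsProj Dcyl (u (3 * k + 2)) w ∧
        u (3 * k + 3) = u (3 * k + 2) + ε • (w - u (3 * k + 2))) :
    ∀ n : ℕ, u n 2 = u 0 2 := by
  intro n
  induction n with
  | zero => rfl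
  | succ n ih =>
    have habs : |u n 2| ≤ 1 := ih ▸ hz
    have hn : n = 3 * (n / 3) + n % 3 := (Nat.div_add_mod n 3).symm
    set k := n / 3 with hk
    have hr : n % 3 = 0 ∨ n % 3 = 1 ∨ n % 3 = 2 := by omega
    rcases hr with hr | hr | hr
    · have hn0 : n = 3 * k := by omega
      obtain ⟨w, hp, he⟩ := h1 k
      have hwz : w 2 = u n 2 := seg_proj_z (-2) _ _ habs (hn0 ▸ hp)
      have : u (n + 1) 2 = u n 2 :=
        step_z ε (u n) (u (n+1)) w hwz (by rw [hn0]; exact he)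
      rw [this, ih]
    · have hn0 : n = 3 * k + 1 := by omega
      obtain ⟨w, hp, he⟩ := h2 k
      have hwz : w 2 = u n 2 := seg_proj_z 2 _ _ habs (hn0 ▸ hp)
      have : u (n + 1) 2 = u n 2 :=
        step_z ε (u n) (u (n+1)) w hwz (by rw [hn0]; exact he)
      rw [this, ih]
    · have hn0 : n = 3 * k + 2 := by omega
      obtain ⟨w, hp, he⟩ := h3 k
      have hwz : w 2 = u n 2 := cyl_proj_z _ _ habs (hn0 ▸ hp)
      have : u (n + 1) 2 = u n 2 :=
        step_z ε (u n) (u (n+1)) w hwz (by rw [hn0]; exact he)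
      rw [this, ih]
end
end

section
/- Let C₁, …, C_m be nonempty compact convex subsets of a real Hilbert space, let (ε_j) be a sequence in (0,1] with ε_j → 0, and for each j let (u₁^j, …, u_m^j) be an ε_j-cycle for (C₁, …, C_m), i.e. u_i^j = u_{i−1}^j + ε_j(Π_{C_i}(u_{i−1}^j) − u_{i−1}^j) for i = 1, …, m, with the convention u₀^j = u_m^j. If (u₁^j, …, u_m^j) converges to (ū₁, …, ū_m) as j → ∞, then ū₁ = ū₂ = ⋯ = ū_m. -/
noncomputable section
open Real Filter

theorem stmt18 {H : Type} [NormedAddCommGroup H] [InnerProductSpace ℝ H] [CompleteSpace H]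
    (m : ℕ) [NeZero m] (C : Fin m → Set H)
    (hC : ∀ i, (C i).Nonempty ∧ IsCompact (C i) ∧ Convex ℝ (C i))
    (ε : ℕ → ℝ) (hε : ∀ j, ε j ∈ Set.Ioc (0 : ℝ) 1) (hε0 : Tendsto ε atTop (nhds 0))
    (u : ℕ → Fin m → H)
    (hcyc : ∀ j : ℕ, ∀ i : Fin m, ∃ w, IsProj (C i) (u j (i - 1)) w ∧
        u j i = u j (i - 1) + ε j • (w - u j (i - 1)))
    (ubar : Fin m → H) (hconv : Tendsto u atTop (nhds ubar)) :
    ∀ i i' : Fin m, ubar i = ubar i' := by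
  choose w hw hu using hcyc
  have key : ∀ i : Fin m, ubar i = ubar (i - 1) := by
    intro i
    have hci : Tendsto (fun j => u j i) atTop (nhds (ubar i)) := by
      have := tendsto_pi_nhds.mp hconv i
      exact this
    have hci' : Tendsto (fun j => u j (i - 1)) atTop (nhds (ubar (i - 1))) := by
      have := tendsto_pi_nhds.mp hconv (i - 1)
      exact this
    have h1 : Tendsto (fun j => u j i - u j (i - 1)) atTop (nhds (ubar i - ubar (i - 1))) :=
      hci.sub hci'
    have h2 : Tendsto (fun j => u j i - u j (i - 1)) atTop (nhds 0) := by
      have heq : (fun j => u j i - u j (i - 1)) = fun j => ε j • (w j i - u j (i - 1)) := by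
        funext j; rw [hu j i]; abel
      rw [heq]
      obtain ⟨R, hR⟩ := (hC i).2.1.isBounded.exists_norm_le
      have hnorm : Tendsto (fun j => ‖u j (i - 1)‖) atTop (nhds ‖ubar (i - 1)‖) :=
        hci'.norm
      obtain ⟨M, hM⟩ := hnorm.isBoundedUnder_le
      have hb : Filter.IsBoundedUnder (· ≤ ·) atTop (fun j => ‖w j i - u j (i - 1)‖) := by
        have hM' : ∀ᶠ j in atTop, ‖u j (i - 1)‖ ≤ M := Filter.eventually_map.mp hM
        refine ⟨R + M, Filter.eventually_map.mpr ?_⟩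
        filter_upwards [hM'] with j hj
        calc ‖w j i - u j (i - 1)‖ ≤ ‖w j i‖ + ‖u j (i - 1)‖ := norm_sub_le _ _
          _ ≤ R + M := add_le_add (hR _ (hw j i).1) hj
      exact hε0.zero_smul_isBoundedUnder_le hb
    exact (sub_eq_zero.mp (tendsto_nhds_unique h1 h2))
  open Fin.CommRing in
  have step : ∀ (k : ℕ) (i : Fin m), ubar i = ubar (i - (k : Fin m)) := by
    intro k
    induction k with
    | zero => intro i; simp
    | succ n ih =>
      intro i
      have : i - ((n + 1 : ℕ) : Fin m) = (i - (n : Fin m)) - 1 := by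
        push_cast
        ring
      rw [this, ← key (i - (n : Fin m))]
      exact ih i
  intro i i'
  have h := step (i - i').val i
  rwa [Fin.cast_val_eq_self, sub_sub_cancel] at h
end
end
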